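/- Let K be a simplicial complex on the vertex set [m] = {1,…,m}. If the Alexander dual K^∨ of K is shellable, then for every nonempty subset I ⊆ [m] the full subcomplex K_I := {σ ∈ K : σ ⊆ I} is fillable. -/

import Mathlib

open Finset

/-- A simplicial complex: a collection of subsets of the vertex set, closed under
taking subsets and containing the empty set. -/
def IsComplex {V : Type*} (K : Set (Finset V)) : Prop :=
  ∅ ∈ K ∧ ∀ σ ∈ K, ∀ τ ⊆ σ, τ ∈ K

/-- `M` is a minimal non-face of `K`. -/
def IsMinNonFace {V : Type*} [DecidableEq V] (K : Set (Finset V)) (M : Finset V) : Prop :=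
  M ∉ K ∧ ∀ v ∈ M, M.erase v ∈ K

/-- `F` is a facet (maximal face) of `K`. -/
def IsFacet {V : Type*} (K : Set (Finset V)) (F : Finset V) : Prop :=
  F ∈ K ∧ ∀ G ∈ K, F ⊆ G → F = G

/-- `L` is a shelling of `K`: a duplicate-free enumeration of all facets of `K` such that
for each `k ≥ 2` (here `k ≥ 1` in 0-indexed form), the collection
`{σ ⊆ F_k : σ ⊆ F_j for some j < k}` is nonempty and each of its maximal elements has
cardinality `|F_k| - 1`. -/
def IsShelling {V : Type*} (K : Set (Finset V)) (L : List (Finset V)) : Prop :=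
  L.Nodup ∧ (∀ F, F ∈ L ↔ IsFacet K F) ∧
    ∀ k : Fin L.length, 1 ≤ (k : ℕ) →
      (∃ σ : Finset V, σ ⊆ L.get k ∧ ∃ j : Fin L.length, (j : ℕ) < (k : ℕ) ∧ σ ⊆ L.get j) ∧
      ∀ σ : Finset V,
        (σ ⊆ L.get k ∧ ∃ j : Fin L.length, (j : ℕ) < (k : ℕ) ∧ σ ⊆ L.get j) →
        (∀ ρ : Finset V,
          (ρ ⊆ L.get k ∧ ∃ j : Fin L.length, (j : ℕ) < (k : ℕ) ∧ ρ ⊆ L.get j) →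
            σ ⊆ ρ → σ = ρ) →
        σ.card + 1 = (L.get k).card

/-- A (possibly void) simplicial complex is shellable if it admits a shelling. -/
def Shellable {V : Type*} (K : Set (Finset V)) : Prop :=
  ∃ L, IsShelling K L

/-- The Alexander dual of `K` with respect to the full vertex set `[m]`. -/
def alexDual {m : ℕ} (K : Set (Finset (Fin m))) : Set (Finset (Fin m)) :=
  {σ | Finset.univ \ σ ∉ K}

/-- The geometric realization of `L` inside `ℝ^m`: the union over the nonempty faces `σ`
of the convex hull of the standard basis vectors indexed by `σ`. -/
def geomReal {m : ℕ} (L : Set (Finset (Fin m))) : Set (Fin m → ℝ) :=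
  ⋃ σ ∈ {σ : Finset (Fin m) | σ ∈ L ∧ σ ≠ ∅},
    convexHull ℝ ((fun i => Pi.single i (1 : ℝ)) '' (σ : Set (Fin m)))

/-- `K` is fillable: there are finitely many (possibly zero) distinct minimal non-faces
`M_1, …, M_r` of `K` such that `|K ∪ {M_1, …, M_r}|` is contractible. -/
def Fillable {m : ℕ} (K : Set (Finset (Fin m))) : Prop :=
  ∃ M : Finset (Finset (Fin m)),
    (∀ N ∈ M, IsMinNonFace K N) ∧ ContractibleSpace ↥(geomReal (K ∪ ↑M))



variable {m : ℕ}

def face (σ : Finset (Fin m)) : Set (Fin m → ℝ) :=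
  {x | (∀ i, 0 ≤ x i) ∧ ∑ i, x i = 1 ∧ ∀ i, x i ≠ 0 → i ∈ σ}

lemma convex_face (σ : Finset (Fin m)) : Convex ℝ (face σ) := by
  intro x hx y hy a b ha hb hab
  refine ⟨fun i => add_nonneg (mul_nonneg ha (hx.1 i)) (mul_nonneg hb (hy.1 i)), ?_, ?_⟩
  · simp only [Pi.add_apply, Pi.smul_apply, smul_eq_mul]
    rw [Finset.sum_add_distrib, ← Finset.mul_sum, ← Finset.mul_sum, hx.2.1, hy.2.1]
    linarith
  · intro i hi
    simp only [Pi.add_apply, Pi.smul_apply, smul_eq_mul] at hi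
    by_contra hns
    have h1 : x i = 0 := by_contra fun h => hns (hx.2.2 i h)
    have h2 : y i = 0 := by_contra fun h => hns (hy.2.2 i h)
    rw [h1, h2] at hi; simp at hi

lemma convexHull_eq_face (σ : Finset (Fin m)) :
    convexHull ℝ ((fun i => Pi.single i (1 : ℝ)) '' (σ : Set (Fin m))) = face σ := by
  apply le_antisymm
  · apply convexHull_min _ (convex_face σ)
    rintro _ ⟨i, hi, rfl⟩
    refine ⟨fun j => ?_, ?_, fun j hj => ?_⟩
    · rcases eq_or_ne i j with rfl | h
      · simp
      · simp [Pi.single_eq_of_ne (Ne.symm h)]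
    · simp
    · rcases eq_or_ne i j with rfl | h
      · simpa using hi
      · simp [Pi.single_eq_of_ne (Ne.symm h)] at hj
  · intro x hx
    have hsum : ∑ i ∈ σ, x i = 1 := by
      rw [← hx.2.1]
      apply Finset.sum_subset (Finset.subset_univ σ)
      intro i _ hi
      by_contra h
      exact hi (hx.2.2 i h)
    have : x = σ.centerMass x (fun i => Pi.single i (1:ℝ)) := by
      rw [Finset.centerMass_eq_of_sum_1 _ _ hsum]
      funext j
      by_cases hj : j ∈ σ
      · simp only [Finset.sum_apply, Pi.smul_apply]
        rw [Finset.sum_eq_single j]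
        · simp
        · intro i hi hne
          rw [Pi.single_apply]
          simp [Ne.symm hne]
        · intro h; exact absurd hj h
      · have hxj : x j = 0 := by_contra fun h => hj (hx.2.2 j h)
        simp only [Finset.sum_apply, Pi.smul_apply]
        rw [hxj]
        symm
        apply Finset.sum_eq_zero
        intro i hi
        rw [Pi.single_apply]
        rcases eq_or_ne j i with rfl | h
        · exact absurd hi hj
        · simp [h]
    rw [this]
    exact Finset.centerMass_mem_convexHull _ (fun i _ => hx.1 i) (by rw [hsum]; norm_num)
      (fun i hi => Set.mem_image_of_mem _ hi)

noncomputable def fsupp (x : Fin m → ℝ) : Finset (Fin m) :=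
  Finset.univ.filter (fun i => x i ≠ 0)

lemma mem_fsupp {x : Fin m → ℝ} {i : Fin m} : i ∈ fsupp x ↔ x i ≠ 0 := by
  simp [fsupp]

lemma geomReal_eq_biUnion (L : Set (Finset (Fin m))) :
    geomReal L = ⋃ σ ∈ {σ : Finset (Fin m) | σ ∈ L ∧ σ ≠ ∅}, face σ := by
  unfold geomReal
  apply Set.iUnion_congr; intro σ
  apply Set.iUnion_congr; intro _
  exact convexHull_eq_face σ

lemma geomReal_down {L : Set (Finset (Fin m))} (hL : ∀ σ ∈ L, ∀ τ ⊆ σ, τ ∈ L) :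
    geomReal L = {x | (∀ i, 0 ≤ x i) ∧ ∑ i, x i = 1 ∧ fsupp x ∈ L} := by
  rw [geomReal_eq_biUnion]
  ext x
  simp only [Set.mem_iUnion, Set.mem_setOf_eq]
  constructor
  · rintro ⟨σ, ⟨hσL, -⟩, hn, hs, hsupp⟩
    exact ⟨hn, hs, hL σ hσL _ (fun i hi => hsupp i (mem_fsupp.mp hi))⟩
  · rintro ⟨hn, hs, hsupp⟩
    refine ⟨fsupp x, ⟨hsupp, ?_⟩, hn, hs, fun i hi => mem_fsupp.mpr hi⟩
    intro h
    have : ∑ i, x i = 0 := by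
      apply Finset.sum_eq_zero
      intro i _
      by_contra hne
      have : i ∈ fsupp x := mem_fsupp.mpr hne
      rw [h] at this; exact absurd this (Finset.notMem_empty i)
    rw [this] at hs; norm_num at hs

variable {m : ℕ}

def KG (G : List (Finset (Fin m))) (I : Finset (Fin m)) : Set (Finset (Fin m)) :=
  {σ | σ ⊆ I ∧ ∀ g ∈ G, ¬ g ⊆ σ}

lemma down_aux (H : List (Finset (Fin m))) (I : Finset (Fin m)) (S : Finset (Finset (Fin m)))
    (hincomp : ∀ g ∈ H, ∀ h ∈ H, g ≠ h → ¬ g ⊆ h)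
    (hS : ∀ N ∈ S, N ∈ H ∧ N ⊆ I) :
    ∀ σ ∈ KG H I ∪ ↑S, ∀ τ ⊆ σ, τ ∈ KG H I ∪ ↑S := by
  intro σ hσ τ hτ
  rcases hσ with hσ | hσ
  · exact Or.inl ⟨hτ.trans hσ.1, fun g hg hgτ => hσ.2 g hg (hgτ.trans hτ)⟩
  · have hσS : σ ∈ S := hσ
    by_cases hts : τ = σ
    · rw [hts]; exact Or.inr hσ
    · left
      refine ⟨hτ.trans (hS σ hσS).2, fun g hg hgτ => ?_⟩
      by_cases hgs : g = σ
      · exact hts (Finset.Subset.antisymm hτ (hgs ▸ hgτ))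
      · exact hincomp g hg σ (hS σ hσS).1 hgs (hgτ.trans hτ)

lemma contractible_of_retract {m : ℕ} (X X' : Set (Fin m → ℝ)) (hsub : X' ⊆ X)
    (R : (Fin m → ℝ) → (Fin m → ℝ)) (hRc : Continuous R)
    (hmaps : ∀ x ∈ X, R x ∈ X') (hid : ∀ x ∈ X', R x = x)
    (hseg : ∀ x ∈ X, ∀ t : ℝ, 0 ≤ t → t ≤ 1 → (1 - t) • x + t • R x ∈ X)
    (hX : ContractibleSpace X) : ContractibleSpace X' := by
  refine ContinuousMap.HomotopyEquiv.contractibleSpace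
    (Y := X) (X := X') ⟨⟨fun x => ⟨x.1, hsub x.2⟩, continuous_subtype_val.subtype_mk _⟩,
      ⟨fun x => ⟨R x.1, hmaps x.1 x.2⟩, (hRc.comp continuous_subtype_val).subtype_mk _⟩,
      ?_, ?_⟩
  · have : (ContinuousMap.mk (fun x : X => (⟨R x.1, hmaps x.1 x.2⟩ : X'))
        ((hRc.comp continuous_subtype_val).subtype_mk _)).comp
        (ContinuousMap.mk (fun x : X' => (⟨x.1, hsub x.2⟩ : X))
        (continuous_subtype_val.subtype_mk _)) = ContinuousMap.id X' := by
      apply ContinuousMap.ext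
      intro x
      exact Subtype.ext (hid x.1 x.2)
    rw [this]
  · constructor
    refine ContinuousMap.Homotopy.mk
      ⟨fun p => ⟨(p.1 : ℝ) • (p.2 : Fin m → ℝ) + (1 - (p.1 : ℝ)) • R p.2, ?_⟩, ?_⟩ ?_ ?_
    · have h01 : (0:ℝ) ≤ (p.1 : ℝ) ∧ (p.1 : ℝ) ≤ 1 := ⟨p.1.2.1, p.1.2.2⟩
      have := hseg p.2.1 p.2.2 (1 - (p.1:ℝ)) (by linarith [h01.2]) (by linarith [h01.1])
      simpa using this
    · refine Continuous.subtype_mk ?_ _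
      fun_prop
    · intro x
      apply Subtype.ext
      simp
    · intro x
      apply Subtype.ext
      simp

lemma geomReal_mono {L₁ L₂ : Set (Finset (Fin m))} (h : L₁ ⊆ L₂) :
    geomReal L₁ ⊆ geomReal L₂ := by
  unfold geomReal
  apply Set.biUnion_subset_biUnion_left
  intro σ hσ
  exact ⟨h hσ.1, hσ.2⟩

lemma main_induction (G : List (Finset (Fin m))) (I : Finset (Fin m)) (hI : I.Nonempty)
    (hne : ∀ g ∈ G, g ≠ ∅)
    (hpw : G.Pairwise (fun a b => ¬ a ⊆ b ∧ ¬ b ⊆ a))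
    (hLQ : ∀ k j (hk : k < G.length) (hj : j < k),
      ∃ v, v ∈ (G[j]'(hj.trans hk)) \ (G[k]'hk) ∧
        ∃ i, ∃ (hi : i < k), (G[i]'(hi.trans hk)) ⊆ insert v (G[k]'hk)) :
    ∃ S : Finset (Finset (Fin m)), (∀ N ∈ S, N ∈ G ∧ N ⊆ I) ∧
      ContractibleSpace ↥(geomReal (KG G I ∪ ↑S)) := by
  classical
  revert hne hpw hLQ
  induction G using List.reverseRecOn with
  | nil =>
    intro hne hpw hLQ
    refine ⟨∅, by simp, ?_⟩
    have hset : KG ([] : List (Finset (Fin m))) I ∪ ↑(∅ : Finset (Finset (Fin m)))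
        = {σ | σ ⊆ I} := by
      ext σ; simp [KG]
    have hgr : geomReal (KG ([] : List (Finset (Fin m))) I ∪ ↑(∅ : Finset (Finset (Fin m))))
        = face I := by
      rw [hset, geomReal_down (L := {σ : Finset (Fin m) | σ ⊆ I})
        (fun σ hσ τ hτ => hτ.trans hσ)]
      ext x
      constructor
      · rintro ⟨h1, h2, h3⟩
        exact ⟨h1, h2, fun i hi => h3 (mem_fsupp.mpr hi)⟩
      · rintro ⟨h1, h2, h3⟩
        exact ⟨h1, h2, fun i hi => h3 i (mem_fsupp.mp hi)⟩
    rw [hgr]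
    obtain ⟨i₀, hi₀⟩ := hI
    have hpt : Pi.single i₀ (1:ℝ) ∈ face I := by
      rw [← convexHull_eq_face]
      exact subset_convexHull _ _ ⟨i₀, hi₀, rfl⟩
    exact (convex_face I).contractibleSpace ⟨_, hpt⟩
  | append_singleton G' A IH =>
    intro hne hpw hLQ
    -- restricted hypotheses
    have hne' : ∀ g ∈ G', g ≠ ∅ := fun g hg => hne g (List.mem_append_left _ hg)
    have hpw' : G'.Pairwise (fun a b => ¬ a ⊆ b ∧ ¬ b ⊆ a) :=
      hpw.sublist (List.sublist_append_left G' [A])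
    have hlen : (G' ++ [A]).length = G'.length + 1 := by simp
    have getA : ∀ (i : ℕ) (h : i < G'.length),
        (G' ++ [A])[i]'(by rw [hlen]; omega) = G'[i]'h := fun i h =>
      List.getElem_append_left h
    have getLast : (G' ++ [A])[G'.length]'(by rw [hlen]; omega) = A := by
      simp
    have hLQ' : ∀ k j (hk : k < G'.length) (hj : j < k),
        ∃ v, v ∈ (G'[j]'(hj.trans hk)) \ (G'[k]'hk) ∧
          ∃ i, ∃ (hi : i < k), (G'[i]'(hi.trans hk)) ⊆ insert v (G'[k]'hk) := by
      intro k j hk hj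
      obtain ⟨v, hv, i, hi, hins⟩ := hLQ k j (by rw [hlen]; omega) hj
      rw [getA k hk, getA j (hj.trans hk)] at hv
      rw [getA k hk, getA i (hi.trans hk)] at hins
      exact ⟨v, hv, i, hi, hins⟩
    have hpairA : ∀ g ∈ G', ¬ g ⊆ A ∧ ¬ A ⊆ g := by
      have h := List.pairwise_append.mp hpw
      intro g hg
      exact h.2.2 g hg A (List.mem_singleton_self A)
    have hAmem : A ∈ G' ++ [A] := List.mem_append_right _ (List.mem_singleton_self A)
    have hAne : A.Nonempty := nonempty_iff_ne_empty.mpr (hne A hAmem)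
    have hincomp' : ∀ g ∈ G', ∀ h ∈ G', g ≠ h → ¬ g ⊆ h := by
      intro g hg h hh hgh
      haveI : Std.Symm (fun a b : Finset (Fin m) => ¬ a ⊆ b ∧ ¬ b ⊆ a) := ⟨fun _ _ hr => ⟨hr.2, hr.1⟩⟩
      exact (List.Pairwise.forall hpw' hg hh hgh).1
    have hincomp : ∀ g ∈ G' ++ [A], ∀ h ∈ G' ++ [A], g ≠ h → ¬ g ⊆ h := by
      intro g hg h hh hgh
      haveI : Std.Symm (fun a b : Finset (Fin m) => ¬ a ⊆ b ∧ ¬ b ⊆ a) := ⟨fun _ _ hr => ⟨hr.2, hr.1⟩⟩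
      exact (List.Pairwise.forall hpw hg hh hgh).1
    by_cases hAI : A ⊆ I
    case neg =>
      obtain ⟨S, hS1, hS2⟩ := IH hne' hpw' hLQ'
      refine ⟨S, fun N hN => ⟨List.mem_append_left _ (hS1 N hN).1, (hS1 N hN).2⟩, ?_⟩
      have hset : KG (G' ++ [A]) I = KG G' I := by
        ext σ
        constructor
        · rintro ⟨h1, h2⟩
          exact ⟨h1, fun g hg => h2 g (List.mem_append_left _ hg)⟩
        · rintro ⟨h1, h2⟩
          refine ⟨h1, fun g hg => ?_⟩
          rcases List.mem_append.mp hg with h | h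
          · exact h2 g h
          · rw [List.mem_singleton.mp h]
            intro hsub
            exact hAI (hsub.trans h1)
      rw [hset]
      exact hS2
    case pos =>
      set W : Finset (Fin m) := (I \ A).filter (fun v => ∃ g ∈ G', g ⊆ insert v A) with hW
      set Ib : Finset (Fin m) := I \ W with hIb
      have hIbI : Ib ⊆ I := sdiff_subset
      have hAIb : A ⊆ Ib := by
        intro v hv
        rw [hIb, mem_sdiff]
        refine ⟨hAI hv, fun hvW => ?_⟩
        rw [hW, mem_filter, mem_sdiff] at hvW
        exact hvW.1.2 hv
      have key1 : ∀ σ : Finset (Fin m), σ ⊆ Ib → ∀ g ∈ G', ¬ g ⊆ σ := by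
        intro σ hσ g hg hgσ
        obtain ⟨j, hj, rfl⟩ := List.mem_iff_getElem.mp hg
        obtain ⟨v, hv, i, hi, hins⟩ := hLQ G'.length j (by rw [hlen]; omega) hj
        rw [getLast] at hv hins
        rw [getA j hj] at hv
        rw [getA i hi] at hins
        rw [mem_sdiff] at hv
        have hvσ : v ∈ σ := hgσ hv.1
        have hvIb : v ∈ Ib := hσ hvσ
        rw [hIb, mem_sdiff] at hvIb
        apply hvIb.2
        rw [hW, mem_filter, mem_sdiff]
        exact ⟨⟨hvIb.1, hv.2⟩, ⟨G'[i]'hi, List.getElem_mem _, hins⟩⟩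
      have hIbK : ∀ σ : Finset (Fin m), σ ⊆ Ib → σ ∈ KG G' I :=
        fun σ h => ⟨h.trans hIbI, key1 σ h⟩
      have key2 : ∀ σ : Finset (Fin m), σ ⊆ Ib → ¬ A ⊆ σ → σ ∈ KG (G' ++ [A]) I := by
        intro σ h1 h2
        refine ⟨h1.trans hIbI, fun g hg => ?_⟩
        rcases List.mem_append.mp hg with h | h
        · exact key1 σ h1 g h
        · rw [List.mem_singleton.mp h]; exact h2
      have claim1 : ∀ σ ∈ KG G' I, σ ∉ KG (G' ++ [A]) I → (A ⊆ σ ∧ σ ⊆ Ib) := by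
        intro σ hσ hσ'
        have hAσ : A ⊆ σ := by
          by_contra hA
          refine hσ' ⟨hσ.1, fun g hg => ?_⟩
          rcases List.mem_append.mp hg with h | h
          · exact hσ.2 g h
          · rw [List.mem_singleton.mp h]; exact hA
        refine ⟨hAσ, fun v hv => ?_⟩
        rw [hIb, mem_sdiff]
        refine ⟨hσ.1 hv, fun hvW => ?_⟩
        rw [hW, mem_filter] at hvW
        obtain ⟨g, hg, hgsub⟩ := hvW.2
        exact hσ.2 g hg (hgsub.trans (insert_subset hv hAσ))
      obtain ⟨S, hS1, hS2⟩ := IH hne' hpw' hLQ'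
      have hSnotA : ∀ N ∈ S, ¬ A ⊆ N := fun N hN => (hpairA N (hS1 N hN).1).2
      have hSI : ∀ N ∈ S, N ⊆ I := fun N hN => (hS1 N hN).2
      by_cases hd : Ib ⊆ A
      · -- K'' = K' ∪ {A}
        have hsetEq : KG G' I ∪ ↑S = KG (G' ++ [A]) I ∪ ↑(insert A S) := by
          ext σ
          simp only [Set.mem_union, coe_insert, Set.mem_insert_iff, mem_coe]
          constructor
          · rintro (hσ | hσ)
            · by_cases hσ' : σ ∈ KG (G' ++ [A]) I
              · exact Or.inl hσ'
              · obtain ⟨h1, h2⟩ := claim1 σ hσ hσ'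
                exact Or.inr (Or.inl (Finset.Subset.antisymm (h2.trans hd) h1))
            · exact Or.inr (Or.inr hσ)
          · rintro (hσ | hσ | hσ)
            · exact Or.inl ⟨hσ.1, fun g hg => hσ.2 g (List.mem_append_left _ hg)⟩
            · rw [hσ]
              exact Or.inl (hIbK A hAIb)
            · exact Or.inr hσ
        refine ⟨insert A S, ?_, ?_⟩
        · intro N hN
          rcases Finset.mem_insert.mp hN with rfl | h
          · exact ⟨hAmem, hAI⟩
          · exact ⟨List.mem_append_left _ (hS1 N h).1, hSI N h⟩
        · rw [← hsetEq]
          exact hS2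
      · -- retraction case
        obtain ⟨w, hwIb, hwA⟩ := Finset.not_subset.mp hd
        set μ : (Fin m → ℝ) → ℝ := fun x => A.inf' hAne x with hμdef
        set R : (Fin m → ℝ) → (Fin m → ℝ) := fun x i =>
          x i - μ x * (if i ∈ A then 1 else 0)
            + ((A.card : ℝ) * μ x) * (if i = w then 1 else 0) with hRdef
        have hμle : ∀ (x : Fin m → ℝ) v, v ∈ A → μ x ≤ x v :=
          fun x v hv => Finset.inf'_le _ hv
        have hμnn : ∀ x : Fin m → ℝ, (∀ i, 0 ≤ x i) → 0 ≤ μ x :=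
          fun x hx => Finset.le_inf' _ _ (fun v _ => hx v)
        have hμex : ∀ x : Fin m → ℝ, ∃ v ∈ A, μ x = x v :=
          fun x => Finset.exists_mem_eq_inf' _ _
        have hRc : Continuous R := by
          have hmu : Continuous μ :=
            Continuous.finset_inf'_apply hAne (fun i _ => continuous_apply i)
          apply continuous_pi
          intro i
          exact ((continuous_apply i).sub (hmu.mul continuous_const)).add
            ((continuous_const.mul hmu).mul continuous_const)
        have hRid : ∀ x : Fin m → ℝ, (∀ i, 0 ≤ x i) → ¬ A ⊆ fsupp x → R x = x := by
          intro x hn hns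
          obtain ⟨v, hvA, hv0⟩ := Finset.not_subset.mp hns
          have hxv : x v = 0 := by
            by_contra h
            exact hv0 (mem_fsupp.mpr h)
          have hμ0 : μ x = 0 :=
            le_antisymm (hxv ▸ hμle x v hvA) (hμnn x hn)
          funext i
          rw [hRdef]
          simp [hμ0]
        have hnotAsupp : ∀ σ : Finset (Fin m), σ ∈ KG (G' ++ [A]) I ∪ ↑S → ¬ A ⊆ σ := by
          intro σ hσ hAs
          rcases hσ with h | h
          · exact h.2 A hAmem hAs
          · exact hSnotA σ h hAs
        have hcases : ∀ σ : Finset (Fin m), σ ∈ KG G' I ∪ ↑S →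
            (σ ∈ KG (G' ++ [A]) I ∪ ↑S) ∨ (A ⊆ σ ∧ σ ⊆ Ib) := by
          intro σ hσ
          rcases hσ with h | h
          · by_cases h' : σ ∈ KG (G' ++ [A]) I
            · exact Or.inl (Or.inl h')
            · exact Or.inr (claim1 σ h h')
          · exact Or.inl (Or.inr h)
        have hRface : ∀ x : Fin m → ℝ, (∀ i, 0 ≤ x i) → ∑ i, x i = 1 → fsupp x ⊆ Ib →
            (∀ i, 0 ≤ R x i) ∧ ∑ i, R x i = 1 ∧ fsupp (R x) ⊆ Ib ∧ ¬ A ⊆ fsupp (R x) := by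
          intro x hn hs hsupp
          have hnn : ∀ i, 0 ≤ R x i := by
            intro i
            rw [hRdef]
            dsimp only
            split_ifs with h1 h2 h2
            · exact absurd (h2 ▸ h1) hwA
            · have := hμle x i h1
              linarith
            · have hμ := hμnn x hn
              have hc : (0:ℝ) ≤ (A.card : ℝ) * μ x := mul_nonneg (Nat.cast_nonneg _) hμ
              have := hn i
              linarith
            · have := hn i
              linarith
          refine ⟨hnn, ?_, ?_, ?_⟩
          · rw [hRdef]
            simp only
            rw [Finset.sum_add_distrib, Finset.sum_sub_distrib, ← Finset.mul_sum,
              ← Finset.mul_sum, hs]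
            have e1 : ∑ i : Fin m, (if i ∈ A then (1:ℝ) else 0) = A.card := by
              rw [Finset.sum_ite_mem, Finset.univ_inter]
              simp
            have e2 : ∑ i : Fin m, (if i = w then (1:ℝ) else 0) = 1 := by
              rw [Finset.sum_ite_eq' Finset.univ w (fun _ => (1:ℝ))]
              simp
            rw [e1, e2]
            ring
          · intro i hi
            rw [mem_fsupp] at hi
            by_cases hiA : i ∈ A
            · exact hAIb hiA
            · by_cases hiw : i = w
              · rw [hiw]; exact hwIb
              · apply hsupp
                rw [mem_fsupp]
                intro hxi
                apply hi
                rw [hRdef]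
                dsimp only
                rw [if_neg hiA, if_neg hiw, hxi]
                ring
          · obtain ⟨v, hvA, hveq⟩ := hμex x
            intro hAs
            have hvw : v ≠ w := fun h => hwA (h ▸ hvA)
            have : R x v = 0 := by
              rw [hRdef]
              dsimp only
              rw [if_pos hvA, if_neg hvw, ← hveq]
              ring
            exact (mem_fsupp.mp (hAs hvA)) this
        -- characterize the two geometric realizations
        have hdown' : ∀ σ ∈ KG (G' ++ [A]) I ∪ ↑S, ∀ τ ⊆ σ, τ ∈ KG (G' ++ [A]) I ∪ ↑S :=
          down_aux _ _ _ hincomp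
            (fun N hN => ⟨List.mem_append_left _ (hS1 N hN).1, hSI N hN⟩)
        have hdown'' : ∀ σ ∈ KG G' I ∪ ↑S, ∀ τ ⊆ σ, τ ∈ KG G' I ∪ ↑S :=
          down_aux _ _ _ hincomp' hS1
        have hXch := geomReal_down hdown''
        have hX'ch := geomReal_down hdown'
        refine ⟨S, fun N hN => ⟨List.mem_append_left _ (hS1 N hN).1, hSI N hN⟩, ?_⟩
        apply contractible_of_retract (geomReal (KG G' I ∪ ↑S))
          (geomReal (KG (G' ++ [A]) I ∪ ↑S)) ?_ R hRc ?_ ?_ ?_ hS2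
        · apply geomReal_mono
          apply Set.union_subset_union_left
          intro σ hσ
          exact ⟨hσ.1, fun g hg => hσ.2 g (List.mem_append_left _ hg)⟩
        · -- hmaps
          intro x hx
          rw [hXch] at hx
          obtain ⟨hn, hs, hsupp⟩ := hx
          rw [hX'ch]
          rcases hcases _ hsupp with h | ⟨hAs, hIbs⟩
          · rw [hRid x hn (hnotAsupp _ h)]
            exact ⟨hn, hs, h⟩
          · obtain ⟨hn', hs', hsub', hnA'⟩ := hRface x hn hs hIbs
            exact ⟨hn', hs', Or.inl (key2 _ hsub' hnA')⟩
        · -- hid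
          intro x hx
          rw [hX'ch] at hx
          exact hRid x hx.1 (hnotAsupp _ hx.2.2)
        · -- hseg
          intro x hx t ht0 ht1
          rw [hXch] at hx ⊢
          obtain ⟨hn, hs, hsupp⟩ := hx
          rcases hcases _ hsupp with h | ⟨hAs, hIbs⟩
          · rw [hRid x hn (hnotAsupp _ h)]
            have : (1 - t) • x + t • x = x := by
              rw [← add_smul]; simp
            rw [this]
            exact ⟨hn, hs, hsupp⟩
          · obtain ⟨hn', hs', hsub', hnA'⟩ := hRface x hn hs hIbs
            refine ⟨?_, ?_, ?_⟩
            · intro i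
              simp only [Pi.add_apply, Pi.smul_apply, smul_eq_mul]
              have := hn i
              have := hn' i
              nlinarith
            · simp only [Pi.add_apply, Pi.smul_apply, smul_eq_mul]
              rw [Finset.sum_add_distrib, ← Finset.mul_sum, ← Finset.mul_sum, hs, hs']
              ring
            · apply Or.inl
              apply hIbK
              intro i hi
              rw [mem_fsupp] at hi
              simp only [Pi.add_apply, Pi.smul_apply, smul_eq_mul] at hi
              by_cases hxi : x i = 0
              · have hRi : R x i ≠ 0 := by
                  intro h
                  rw [hxi, h] at hi
                  simp at hi
                exact hsub' (mem_fsupp.mpr hRi)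
              · exact hIbs (mem_fsupp.mpr hxi)

lemma erase_compl_eq (a : Finset (Fin m)) (v : Fin m) :
    (univ \ a).erase v = univ \ insert v a := by
  ext i; simp [and_comm]

lemma exists_min_nonface {K : Set (Finset (Fin m))} (hK : IsComplex K) :
    ∀ σ : Finset (Fin m), σ ∉ K → ∃ M, M ⊆ σ ∧ IsMinNonFace K M := by
  intro σ
  induction σ using Finset.strongInduction with
  | _ σ ih =>
    intro hσ
    by_cases h : ∀ v ∈ σ, σ.erase v ∈ K
    · exact ⟨σ, Finset.Subset.refl σ, hσ, h⟩
    · push_neg at h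
      obtain ⟨v, hv, herase⟩ := h
      obtain ⟨M, hM1, hM2⟩ := ih (σ.erase v) (Finset.erase_ssubset hv) herase
      exact ⟨M, hM1.trans (Finset.erase_subset v σ), hM2⟩

lemma facet_iff_min_nonface {K : Set (Finset (Fin m))} (hK : IsComplex K)
    (F : Finset (Fin m)) :
    IsFacet (alexDual K) F ↔ IsMinNonFace K (univ \ F) := by
  constructor
  · rintro ⟨hF, hmax⟩
    refine ⟨hF, fun v hv => ?_⟩
    rw [erase_compl_eq]
    by_contra hc
    have : F = insert v F := hmax (insert v F) hc (Finset.subset_insert v F)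
    exact (mem_sdiff.mp hv).2 (this ▸ Finset.mem_insert_self v F)
  · rintro ⟨h1, h2⟩
    refine ⟨h1, fun ρ hρ hsub => ?_⟩
    have hcc : univ \ ρ ⊆ univ \ F := by
      intro v hvρ
      rw [mem_sdiff] at hvρ ⊢
      exact ⟨hvρ.1, fun hvF => hvρ.2 (hsub hvF)⟩
    have heq : univ \ ρ = univ \ F := by
      by_contra hne
      have hss : univ \ ρ ⊂ univ \ F := lt_of_le_of_ne hcc hne
      obtain ⟨v, hvF, hvρ⟩ := Finset.exists_of_ssubset hss
      have : univ \ ρ ⊆ (univ \ F).erase v :=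
        fun u hu => Finset.mem_erase.mpr ⟨fun he => hvρ (he ▸ hu), hcc hu⟩
      exact hρ (hK.2 _ (h2 v hvF) _ this)
    have : ρ = F := by
      have := congrArg (univ \ ·) heq
      simpa using this
    exact this.symm


/-- If the Alexander dual of `K` is shellable, then every full subcomplex
`K_I = {σ ∈ K : σ ⊆ I}`, for nonempty `I ⊆ [m]`, is fillable. -/
theorem fullSubcomplex_fillable_of_dual_shellable {m : ℕ} (K : Set (Finset (Fin m)))
    (hK : IsComplex K) (hshell : Shellable (alexDual K)) :
    ∀ I : Finset (Fin m), I.Nonempty → Fillable {σ ∈ K | σ ⊆ I} := by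
  classical
  intro I hI
  obtain ⟨L, hnd, hfac, hsh⟩ := hshell
  set G : List (Finset (Fin m)) := L.map (fun F => univ \ F) with hG
  have hGlen : G.length = L.length := by simp [hG]
  have hGget : ∀ (i : ℕ) (h : i < L.length), G[i]'(by rw [hGlen]; exact h) = univ \ (L[i]'h) := by
    intro i h
    simp [hG]
  -- every member of G is a minimal nonface
  have hGmnf : ∀ g ∈ G, IsMinNonFace K g := by
    intro g hg
    obtain ⟨F, hF, rfl⟩ := List.mem_map.mp hg
    exact (facet_iff_min_nonface hK F).mp ((hfac F).mp hF)
  -- characterization of K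
  have Kchar : ∀ σ : Finset (Fin m), σ ∈ K ↔ ∀ g ∈ G, ¬ g ⊆ σ := by
    intro σ
    constructor
    · intro hσ g hg hgσ
      exact (hGmnf g hg).1 (hK.2 σ hσ g hgσ)
    · intro h
      by_contra hσ
      obtain ⟨M, hMσ, hM⟩ := exists_min_nonface hK σ hσ
      have hfacet : IsFacet (alexDual K) (univ \ M) := by
        rw [facet_iff_min_nonface hK]
        simpa using hM
      have : univ \ M ∈ L := (hfac _).mpr hfacet
      have hMG : M ∈ G := by
        rw [hG]
        refine List.mem_map.mpr ⟨univ \ M, this, by simp⟩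
      exact h M hMG hMσ
  -- hypotheses of main_induction
  have hne : ∀ g ∈ G, g ≠ ∅ := by
    intro g hg h
    exact (hGmnf g hg).1 (h ▸ hK.1)
  have hpw : G.Pairwise (fun a b => ¬ a ⊆ b ∧ ¬ b ⊆ a) := by
    rw [List.pairwise_iff_getElem]
    intro i j hi hj hij
    have hiL : i < L.length := by rwa [hGlen] at hi
    have hjL : j < L.length := by rwa [hGlen] at hj
    rw [hGget i hiL, hGget j hjL]
    have hne' : L[i]'hiL ≠ L[j]'hjL := by
      intro h
      exact absurd (List.Nodup.getElem_inj_iff hnd |>.mp h) (Nat.ne_of_lt hij)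
    have hfi : IsFacet (alexDual K) (L[i]'hiL) := (hfac _).mp (List.getElem_mem _)
    have hfj : IsFacet (alexDual K) (L[j]'hjL) := (hfac _).mp (List.getElem_mem _)
    constructor
    · intro hsub
      have : L[j]'hjL ⊆ L[i]'hiL := by
        intro v hv
        by_contra hva
        exact (mem_sdiff.mp (hsub (mem_sdiff.mpr ⟨mem_univ v, hva⟩))).2 hv
      exact hne' (hfj.2 _ hfi.1 this).symm
    · intro hsub
      have : L[i]'hiL ⊆ L[j]'hjL := by
        intro v hv
        by_contra hva
        exact (mem_sdiff.mp (hsub (mem_sdiff.mpr ⟨mem_univ v, hva⟩))).2 hv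
      exact hne' (hfi.2 _ hfj.1 this)
  have hLQ : ∀ k j (hk : k < G.length) (hj : j < k),
      ∃ v, v ∈ (G[j]'(hj.trans hk)) \ (G[k]'hk) ∧
        ∃ i, ∃ (hi : i < k), (G[i]'(hi.trans hk)) ⊆ insert v (G[k]'hk) := by
    intro k j hk hj
    have hkL : k < L.length := by rwa [hGlen] at hk
    have hjL : j < L.length := hj.trans hkL
    obtain ⟨hcov, hmax⟩ := hsh ⟨k, hkL⟩ (by show (1:ℕ) ≤ k; omega)
    -- the covered collection, as a finset
    set Fk := L.get ⟨k, hkL⟩ with hFk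
    set Fj := L.get ⟨j, hjL⟩ with hFj
    set C : Finset (Finset (Fin m)) := Fk.powerset.filter
      (fun τ => (τ ⊆ Fk ∧ ∃ jj : Fin L.length, (jj : ℕ) < k ∧ τ ⊆ L.get jj) ∧ Fk ∩ Fj ⊆ τ)
      with hC
    have hC0 : Fk ∩ Fj ∈ C := by
      rw [hC, mem_filter, mem_powerset]
      exact ⟨inter_subset_left, ⟨inter_subset_left, ⟨⟨j, hjL⟩, hj, inter_subset_right⟩⟩,
        Finset.Subset.refl _⟩
    obtain ⟨τ, hτC, hτmax⟩ := Finset.exists_max_image C Finset.card ⟨_, hC0⟩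
    rw [hC, mem_filter] at hτC
    obtain ⟨hτpow, ⟨hτFk, hτcov⟩, hτ0⟩ := hτC
    -- τ is maximal among covered sets
    have hmaxτ : ∀ ρ : Finset (Fin m),
        (ρ ⊆ Fk ∧ ∃ jj : Fin L.length, (jj : ℕ) < k ∧ ρ ⊆ L.get jj) → τ ⊆ ρ → τ = ρ := by
      intro ρ hρ hτρ
      have hρC : ρ ∈ C := by
        rw [hC, mem_filter, mem_powerset]
        exact ⟨hρ.1, hρ, hτ0.trans hτρ⟩
      exact Finset.eq_of_subset_of_card_le hτρ (hτmax ρ hρC)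
    have hcard := hmax τ ⟨hτFk, hτcov⟩ hmaxτ
    -- extract the single vertex
    have hsd : (Fk \ τ).card = 1 := by
      rw [Finset.card_sdiff_of_subset hτFk]
      omega
    obtain ⟨v, hv⟩ := Finset.card_eq_one.mp hsd
    have hvFk : v ∈ Fk := (mem_sdiff.mp (hv ▸ Finset.mem_singleton_self v)).1
    have hvτ : v ∉ τ := (mem_sdiff.mp (hv ▸ Finset.mem_singleton_self v)).2
    have hτer : τ = Fk.erase v := by
      apply Finset.eq_of_subset_of_card_le (Finset.subset_erase.mpr ⟨hτFk, hvτ⟩)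
      rw [Finset.card_erase_of_mem hvFk]
      omega
    have hvFj : v ∉ Fj := by
      intro hvj
      exact hvτ (hτ0 (Finset.mem_inter.mpr ⟨hvFk, hvj⟩))
    obtain ⟨jj, hjjk, hτjj⟩ := hτcov
    refine ⟨v, ?_, jj, hjjk, ?_⟩
    · rw [hGget j hjL, hGget k hkL, mem_sdiff, mem_sdiff, mem_sdiff]
      refine ⟨⟨mem_univ v, ?_⟩, fun hc => ?_⟩
      · rw [hFj] at hvFj
        simpa [List.get_eq_getElem] using hvFj
      · apply hc.2
        rw [hFk] at hvFk
        simpa [List.get_eq_getElem] using hvFk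
    · have hjjL : (jj : ℕ) < L.length := jj.2
      rw [hGget jj.1 hjjL, hGget k hkL]
      intro u hu
      rw [mem_sdiff] at hu
      rcases eq_or_ne u v with rfl | huv
      · exact Finset.mem_insert_self _ _
      · apply Finset.mem_insert_of_mem
        rw [mem_sdiff]
        refine ⟨mem_univ u, fun huFk => ?_⟩
        apply hu.2
        have huτ : u ∈ τ := by
          rw [hτer]
          exact Finset.mem_erase.mpr ⟨huv, by simpa [hFk, List.get_eq_getElem] using huFk⟩
        have := hτjj huτ
        simpa [List.get_eq_getElem] using this
  obtain ⟨S, hS1, hS2⟩ := main_induction G I hI hne hpw hLQ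
  refine ⟨S, ?_, ?_⟩
  · intro N hN
    obtain ⟨hNG, hNI⟩ := hS1 N hN
    have hmnf := hGmnf N hNG
    refine ⟨?_, ?_⟩
    · intro hc
      exact hmnf.1 hc.1
    · intro v hv
      exact ⟨hmnf.2 v hv, (Finset.erase_subset v N).trans hNI⟩
  · have hsetEq : {σ ∈ K | σ ⊆ I} ∪ (↑S : Set (Finset (Fin m))) = KG G I ∪ ↑S := by
      apply congrArg (· ∪ (↑S : Set (Finset (Fin m))))
      ext σ
      rw [Set.mem_setOf_eq]
      constructor
      · rintro ⟨h1, h2⟩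
        exact ⟨h2, (Kchar σ).mp h1⟩
      · rintro ⟨h1, h2⟩
        exact ⟨(Kchar σ).mpr h2, h1⟩
    rw [hsetEq]
    exact hS2
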